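/- Let k be a field, let p̃ ∈ k[x] be a monic separable polynomial of degree s, let K be a splitting field of p̃ over k with λ_1, …, λ_s the (distinct) roots of p̃ in K, and let m ≥ 1 be an integer. Then there exists a polynomial h ∈ k[x] of degree strictly less than s·m such that, in K[x], (x − λ_j)^m divides h − λ_j for every j with 1 ≤ j ≤ s. -/

import Mathlib

open Polynomial

private lemma newton_step {k : Type*} [Field k] (P a b : k[X])
    (hab : a * P + b * P.derivative = 1) :
    ∀ t : ℕ, ∃ h : k[X], P ∣ (h - X) ∧ P ^ (t + 1) ∣ P.comp h := by
  intro t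
  induction t with
  | zero => exact ⟨X, by simp, by simp⟩
  | succ t ih =>
    obtain ⟨h, h1, h2⟩ := ih
    have hPh : P ∣ P.comp h := dvd_trans (dvd_pow_self P (Nat.succ_ne_zero t)) h2
    refine ⟨h - P.comp h * b.comp h, ?_, ?_⟩
    · have : h - P.comp h * b.comp h - X = (h - X) - P.comp h * b.comp h := by ring
      rw [this]
      exact dvd_sub h1 (hPh.mul_right _)
    · obtain ⟨c, hc⟩ :=
        (P.map (C : k →+* k[X])).binomExpansion h (-(P.comp h * b.comp h))
      have hcomp : ∀ q : k[X], (P.map (C : k →+* k[X])).eval q = P.comp q := by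
        intro q; rw [eval_map]; rfl
      have hd : ((P.map (C : k →+* k[X])).derivative).eval h = P.derivative.comp h := by
        rw [derivative_map, eval_map]; rfl
      rw [← sub_eq_add_neg, hcomp, hcomp, hd] at hc
      have hb : a.comp h * P.comp h + b.comp h * (P.derivative.comp h) = 1 := by
        have := congrArg (fun q => q.comp h) hab
        simpa [add_comp, mul_comp] using this
      have key : P.comp (h - P.comp h * b.comp h) =
          (P.comp h) ^ 2 * (a.comp h + c * (b.comp h) ^ 2) := by
        linear_combination hc - P.comp h * hb
      rw [key]
      refine Dvd.dvd.mul_right ?_ _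
      calc P ^ (t + 1 + 1) ∣ P ^ (2 * (t + 1)) := pow_dvd_pow P (by omega)
        _ = (P ^ (t + 1)) ^ 2 := by rw [← pow_mul, mul_comm]
        _ ∣ (P.comp h) ^ 2 := pow_dvd_pow_of_dvd h2 2

theorem exists_congruence_solution_in_base_field
    {k K : Type*} [Field k] [Field K] [Algebra k K]
    (ptilde : k[X]) (hmon : ptilde.Monic) (hsep : ptilde.Separable)
    (hsplit : IsSplittingField k K ptilde)
    (s : ℕ) (hs : ptilde.natDegree = s)
    (m : ℕ) (hm : 1 ≤ m) :
    ∃ h : k[X], h.degree < (s * m : ℕ) ∧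
      ∀ lam : K, aeval lam ptilde = 0 →
        (X - C lam) ^ m ∣ h.map (algebraMap k K) - C lam := by
  set P := ptilde
  obtain ⟨a, b, hab⟩ := id hsep
  obtain ⟨h₀, h1, h2⟩ := newton_step P a b hab (m - 1)
  rw [Nat.sub_add_cancel hm] at h2
  have hPm : (P ^ m).Monic := hmon.pow m
  set h : k[X] := h₀ %ₘ (P ^ m) with hdef
  have hsub : P ^ m ∣ h₀ - h := by
    rw [hdef, modByMonic_eq_sub_mul_div h₀ (P ^ m)]
    simp [mul_comm]
  have hPdvd : P ∣ P ^ m := dvd_pow_self P (by omega)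
  -- P ∣ h - X
  have hX : P ∣ h - X := by
    have : h - X = (h₀ - X) - (h₀ - h) := by ring
    rw [this]
    exact dvd_sub h1 (hPdvd.trans hsub)
  -- P^m ∣ P.comp h
  have hcompdvd : P ^ m ∣ P.comp h := by
    have heval : ∀ q : k[X], (P.map (C : k →+* k[X])).eval q = P.comp q := by
      intro q; rw [eval_map]; rfl
    have hdd : P ^ m ∣ P.comp h₀ - P.comp h := by
      have he := sub_dvd_eval_sub h₀ h (P.map (C : k →+* k[X]))
      rw [heval, heval] at he
      exact hsub.trans he
    have : P.comp h = P.comp h₀ - (P.comp h₀ - P.comp h) := by ring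
    rw [this]
    exact dvd_sub h2 hdd
  refine ⟨h, ?_, ?_⟩
  · have := degree_modByMonic_lt h₀ hPm
    rwa [degree_eq_natDegree hPm.ne_zero, natDegree_pow, hs, mul_comm] at this
  · intro lam hlam
    set A := algebraMap k K
    set PK := P.map A with hPK
    set hK := (h.map A) with hhK
    have hroot : PK.IsRoot lam := by
      rwa [IsRoot, eval_map, ← aeval_def]
    obtain ⟨Q, hQ⟩ := (dvd_iff_isRoot).2 hroot
    -- hK.eval lam = lam
    have hXK : (X : K[X]) - C lam ∣ hK - X := by
      refine dvd_trans (dvd_iff_isRoot.2 hroot) ?_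
      have := Polynomial.map_dvd (f := A) hX
      rwa [Polynomial.map_sub, map_X] at this
    have hevalhK : hK.eval lam = lam := by
      have := hXK
      rw [dvd_iff_isRoot] at this
      simpa [IsRoot, sub_eq_zero] using this
    -- Q doesn't vanish at lam
    have hQlam : Q.eval lam ≠ 0 := by
      intro h0
      obtain ⟨R, hR⟩ := (dvd_iff_isRoot).2 h0
      have hsq : Squarefree PK := (Polynomial.Separable.map hsep).squarefree
      have : IsUnit ((X : K[X]) - C lam) := by
        refine hsq _ ?_
        exact ⟨R, by rw [hQ, hR]; ring⟩
      exact (Polynomial.not_isUnit_X_sub_C lam) this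
    -- divisibility of the composite
    have hdvd2 : ((X : K[X]) - C lam) ^ m ∣ (hK - C lam) * (Q.comp hK) := by
      have hPKm : PK ^ m ∣ PK.comp hK := by
        have := Polynomial.map_dvd (f := A) hcompdvd
        rwa [Polynomial.map_pow, Polynomial.map_comp] at this
      have hfac : PK.comp hK = (hK - C lam) * (Q.comp hK) := by
        rw [hQ, mul_comp, sub_comp, X_comp, C_comp]
      refine dvd_trans ?_ (hfac ▸ hPKm)
      exact pow_dvd_pow_of_dvd (dvd_iff_isRoot.2 hroot) m
    have hcop : IsCoprime (((X : K[X]) - C lam) ^ m) (Q.comp hK) := by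
      refine IsCoprime.pow_left ?_
      rw [(prime_X_sub_C lam).coprime_iff_not_dvd]
      intro hdv
      exact hQlam (by simpa [IsRoot, eval_comp, hevalhK] using (dvd_iff_isRoot).1 hdv)
    exact hcop.dvd_of_dvd_mul_right hdvd2
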